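/- For every real t with −1 ≤ t ≤ 1, the series ∑_{k=0}^∞ [1 k] t^k converges and equals t + √(1 + t²). -/

import Mathlib

open scoped Real Classical

/-- The generalized β-binomial coefficient `[n k]_β`:
`Γ(βn+1)/(Γ(βk+1)·Γ(β(n−k)+1))` when `β(n−k)` is not an integer `≤ -1`, else `0`. -/
noncomputable def bbinom (β : ℝ) (n : ℕ) (k : ℤ) : ℝ :=
  if ∃ m : ℤ, m ≤ -1 ∧ β * ((n : ℝ) - (k : ℝ)) = (m : ℝ) then 0
  else Real.Gamma (β * n + 1) /
    (Real.Gamma (β * k + 1) * Real.Gamma (β * ((n : ℝ) - (k : ℝ)) + 1))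

/-- The 1/2-binomial coefficient. -/
noncomputable def bhalf (n : ℕ) (k : ℤ) : ℝ := bbinom (1/2) n k

/-- The coefficients of the binomial series for `(1+x)^(1/2)`. -/
noncomputable def cc : ℕ → ℝ
  | 0 => 1
  | (j+1) => cc j * (1/2 - j) / (j+1)

lemma cc_zero : cc 0 = 1 := rfl
lemma cc_succ (j : ℕ) : cc (j+1) = cc j * (1/2 - j) / (j+1) := rfl
lemma cc_one : cc 1 = 1/2 := by norm_num [cc_succ, cc_zero]

/-- `bb j = C(2j,j)/4^j`, via its recursion. -/
noncomputable def bb : ℕ → ℝ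
  | 0 => 1
  | (j+1) => bb j * (2*j+1) / (2*j+2)

lemma bb_zero : bb 0 = 1 := rfl
lemma bb_succ (j : ℕ) : bb (j+1) = bb j * (2*j+1) / (2*j+2) := rfl
lemma bb_one : bb 1 = 1/2 := by norm_num [bb_succ, bb_zero]

lemma bb_pos (j : ℕ) : 0 < bb j := by
  induction j with
  | zero => norm_num [bb_zero]
  | succ n ih =>
      rw [bb_succ]
      positivity

lemma cc_abs (j : ℕ) : |cc (j+1)| = bb j / (2*j+2) := by
  induction j with
  | zero => norm_num [cc_one, bb_zero]
  | succ n ih =>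
      rw [cc_succ, abs_div, abs_mul, ih]
      have h1 : |(1/2 - ((n+1 : ℕ) : ℝ))| = (n : ℝ) + 1/2 := by
        rw [abs_of_nonpos (by push_cast; linarith [Nat.cast_nonneg (α := ℝ) n])]
        push_cast; ring
      have h2 : |((n+1 : ℕ) : ℝ) + 1| = (n : ℝ) + 2 := by
        rw [abs_of_nonneg (by positivity)]
        push_cast; ring
      rw [h1, h2, bb_succ]
      have hb := bb_pos n
      push_cast
      field_simp
      ring

lemma bb_sub (j : ℕ) : bb j - bb (j+1) = bb j / (2*j+2) := by
  rw [bb_succ]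
  field_simp
  ring

lemma summable_abs_cc : Summable (fun j => |cc j|) := by
  rw [← summable_nat_add_iff 1]
  apply summable_of_sum_range_le (c := 1) (fun n => abs_nonneg _)
  intro n
  have : ∀ i ∈ Finset.range n, |cc (i+1)| = bb i - bb (i+1) := by
    intro i _
    rw [cc_abs, bb_sub]
  rw [Finset.sum_congr rfl this, Finset.sum_range_sub' bb n, bb_zero]
  linarith [bb_pos n]

lemma tsum_abs_cc_tail : (∑' j : ℕ, |cc (j+2)|) ≤ 1/2 := by
  apply Real.tsum_le_of_sum_range_le (fun n => abs_nonneg _)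
  intro n
  have : ∀ i ∈ Finset.range n, |cc (i+2)| = bb (i+1) - bb (i+2) := by
    intro i _
    rw [cc_abs, bb_sub]
  rw [Finset.sum_congr rfl this, Finset.sum_range_sub' (fun i => bb (i+1)) n, bb_one]
  linarith [bb_pos (n+1)]

/-- Cauchy product coefficients. -/
noncomputable def Cf (n : ℕ) : ℝ := ∑ i ∈ Finset.range (n+1), cc i * cc (n - i)

lemma hc (i : ℕ) : ((i : ℝ)+1) * cc (i+1) = (1/2 - i) * cc i := by
  have hi : ((i : ℝ) + 1) ≠ 0 := by positivity
  rw [cc_succ]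
  field_simp

lemma two_A (n : ℕ) :
    2 * (∑ i ∈ Finset.range (n+1), (i : ℝ) * cc i * cc (n-i)) = n * Cf n := by
  have h1 : ∑ i ∈ Finset.range (n+1), (i : ℝ) * cc i * cc (n-i)
      = ∑ i ∈ Finset.range (n+1), ((n-i : ℕ) : ℝ) * cc (n-i) * cc i := by
    rw [← Finset.sum_range_reflect (fun i => ((n-i : ℕ) : ℝ) * cc (n-i) * cc i) (n+1)]
    apply Finset.sum_congr rfl
    intro j hj
    have hj' : j ≤ n := Nat.lt_succ_iff.mp (Finset.mem_range.mp hj)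
    have e1 : n + 1 - 1 - j = n - j := by omega
    have e2 : n - (n - j) = j := Nat.sub_sub_self hj'
    rw [e1, e2]
  rw [two_mul]
  nth_rewrite 2 [h1]
  rw [← Finset.sum_add_distrib, Cf, Finset.mul_sum]
  apply Finset.sum_congr rfl
  intro i hi
  have hi' : i ≤ n := Nat.lt_succ_iff.mp (Finset.mem_range.mp hi)
  have : ((n - i : ℕ) : ℝ) = (n : ℝ) - i := by
    rw [Nat.cast_sub hi']
  rw [this]
  ring

lemma Cf_rec (n : ℕ) : ((n : ℝ)+1) * Cf (n+1) = (1 - n) * Cf n := by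
  have key : (∑ i ∈ Finset.range (n+2), (i : ℝ) * cc i * cc (n+1-i))
      = (1/2) * Cf n - (∑ i ∈ Finset.range (n+1), (i : ℝ) * cc i * cc (n-i)) := by
    rw [Finset.sum_range_succ' (fun i => (i : ℝ) * cc i * cc (n+1-i)) (n+1)]
    simp only [Nat.cast_zero, zero_mul, add_zero, Nat.succ_sub_succ]
    have : ∀ i ∈ Finset.range (n+1),
        ((i+1 : ℕ) : ℝ) * cc (i+1) * cc (n-i) = (1/2 - i) * cc i * cc (n-i) := by
      intro i _
      have := hc i
      push_cast
      push_cast at this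
      rw [this]
    rw [Finset.sum_congr rfl this]
    rw [Cf, Finset.mul_sum, ← Finset.sum_sub_distrib]
    apply Finset.sum_congr rfl
    intro i _
    ring
  have h2 := two_A (n+1)
  have h3 := two_A n
  push_cast at h2
  rw [key] at h2
  nlinarith [h2, h3]

lemma Cf_zero : Cf 0 = 1 := by norm_num [Cf, cc_zero]

lemma Cf_one : Cf 1 = 1 := by
  rw [Cf]
  rw [Finset.sum_range_succ, Finset.sum_range_succ, Finset.sum_range_zero]
  norm_num [cc_zero, cc_one]

lemma Cf_eq_zero (n : ℕ) (hn : 2 ≤ n) : Cf n = 0 := by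
  obtain ⟨m, rfl⟩ : ∃ m, n = m + 2 := ⟨n - 2, by omega⟩
  clear hn
  induction m with
  | zero =>
      have h := Cf_rec 1
      rw [Cf_one] at h
      norm_num at h
      linarith
  | succ k ih =>
      have e : k + 1 + 2 = (k + 2) + 1 := by omega
      rw [e]
      have h := Cf_rec (k + 2)
      rw [ih, mul_zero] at h
      have hne : ((k + 2 : ℕ) : ℝ) + 1 ≠ 0 := by positivity
      rcases mul_eq_zero.mp h with h' | h'
      · exact absurd h' hne
      · exact h'

lemma hasSum_cc (x : ℝ) (hx0 : 0 ≤ x) (hx1 : x ≤ 1) :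
    HasSum (fun j => cc j * x ^ j) (Real.sqrt (1 + x)) := by
  have habs : ∀ j, ‖cc j * x ^ j‖ ≤ |cc j| := by
    intro j
    rw [Real.norm_eq_abs, abs_mul]
    have h1 : |x ^ j| ≤ 1 := by
      rw [abs_pow]
      exact pow_le_one₀ (abs_nonneg x) (abs_le.mpr ⟨by linarith, hx1⟩)
    nlinarith [abs_nonneg (cc j)]
  have hs : Summable (fun j => cc j * x ^ j) :=
    Summable.of_norm_bounded summable_abs_cc habs
  have hnorm : Summable (fun j => ‖cc j * x ^ j‖) :=
    Summable.of_nonneg_of_le (fun j => norm_nonneg _) habs summable_abs_cc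
  set S := ∑' j, cc j * x ^ j with hSdef
  have hS2 : S * S = 1 + x := by
    rw [hSdef, tsum_mul_tsum_eq_tsum_sum_range_of_summable_norm hnorm hnorm]
    have e1 : ∀ n : ℕ, ∑ k ∈ Finset.range (n+1), (cc k * x ^ k) * (cc (n-k) * x ^ (n-k))
        = Cf n * x ^ n := by
      intro n
      rw [Cf, Finset.sum_mul]
      apply Finset.sum_congr rfl
      intro k hk
      have hk' : k ≤ n := Nat.lt_succ_iff.mp (Finset.mem_range.mp hk)
      have : x ^ k * x ^ (n - k) = x ^ n := by
        rw [← pow_add, Nat.add_sub_cancel' hk']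
      calc (cc k * x ^ k) * (cc (n-k) * x ^ (n-k))
          = cc k * cc (n-k) * (x ^ k * x ^ (n-k)) := by ring
        _ = cc k * cc (n - k) * x ^ n := by rw [this]
    rw [tsum_congr e1]
    rw [tsum_eq_sum (s := ({0, 1} : Finset ℕ)) (by
      intro b hb
      have hb' : 2 ≤ b := by
        simp only [Finset.mem_insert, Finset.mem_singleton] at hb
        omega
      rw [Cf_eq_zero b hb', zero_mul])]
    rw [Finset.sum_insert (by norm_num), Finset.sum_singleton, Cf_zero, Cf_one]
    ring
  have hSpos : 0 < S := by
    have hs1 : Summable (fun j => cc (j+1) * x ^ (j+1)) :=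
      (summable_nat_add_iff (f := fun j => cc j * x ^ j) 1).mpr hs
    have e1 : S = cc 0 * x ^ 0 + (cc 1 * x ^ 1 + ∑' j, cc (j+2) * x ^ (j+2)) := by
      have e2 : (fun j : ℕ => cc (j+1+1) * x ^ (j+1+1)) = fun j => cc (j+2) * x ^ (j+2) := rfl
      rw [hSdef, Summable.tsum_eq_zero_add hs, Summable.tsum_eq_zero_add hs1, e2]
    have habs2 : Summable (fun j : ℕ => |cc (j+2)|) :=
      (summable_nat_add_iff (f := fun j => |cc j|) 2).mpr summable_abs_cc
    have htail : |∑' j, cc (j+2) * x ^ (j+2)| ≤ 1/2 := by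
      calc |∑' j, cc (j+2) * x ^ (j+2)| ≤ ∑' j, ‖cc (j+2) * x ^ (j+2)‖ := by
            rw [← Real.norm_eq_abs]
            exact norm_tsum_le_tsum_norm (by
              apply Summable.of_nonneg_of_le (fun j => norm_nonneg _) (fun j => habs (j+2)) habs2)
        _ ≤ ∑' j : ℕ, |cc (j+2)| := by
            apply Summable.tsum_le_tsum (fun j => habs (j+2)) _ habs2
            apply Summable.of_nonneg_of_le (fun j => norm_nonneg _) (fun j => habs (j+2)) habs2
        _ ≤ 1/2 := tsum_abs_cc_tail
    rw [e1, cc_zero, cc_one]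
    have := abs_le.mp htail
    have hx2 : 0 ≤ 1/2 * x ^ 1 := by positivity
    nlinarith [this.1]
  have hsqrt : Real.sqrt (1 + x) = S := by
    rw [← hS2, Real.sqrt_mul_self hSpos.le]
  rw [hsqrt]
  exact hs.hasSum

lemma bhalf_even_eq (j : ℕ) :
    bhalf 1 ((2*j : ℕ) : ℤ) = Real.Gamma (3/2) / (Real.Gamma ((j : ℝ)+1) * Real.Gamma (3/2 - j)) := by
  rw [bhalf, bbinom, if_neg]
  · have e1 : (1/2 : ℝ) * ((1 : ℕ) : ℝ) + 1 = 3/2 := by norm_num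
    have e2 : (1/2 : ℝ) * (((2*j : ℕ) : ℤ) : ℝ) + 1 = (j : ℝ) + 1 := by push_cast; ring
    have e3 : (1/2 : ℝ) * (((1 : ℕ) : ℝ) - (((2*j : ℕ) : ℤ) : ℝ)) + 1 = 3/2 - j := by
      push_cast; ring
    rw [e1, e2, e3]
  · rintro ⟨m, hm1, hm2⟩
    have : (1 : ℝ) - 2*j = 2*m := by push_cast at hm2 ⊢; linarith
    have : (1 : ℤ) - 2*j = 2*m := by exact_mod_cast this
    omega

lemma half_sub_ne (n : ℕ) : (1/2 : ℝ) - n ≠ 0 := by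
  intro h
  have : (1 : ℝ) = 2*n := by linarith
  have : (1 : ℕ) = 2*n := by exact_mod_cast this
  omega

lemma gamma_half_sub_ne (n : ℕ) : Real.Gamma ((1/2 : ℝ) - n) ≠ 0 := by
  apply Real.Gamma_ne_zero
  intro m h
  have h2 : ((2*(n : ℤ) - 2*m : ℤ) : ℝ) = 1 := by push_cast; linarith
  have h3 : (2*(n : ℤ) - 2*m : ℤ) = 1 := by exact_mod_cast h2
  omega

lemma gamma_cc (j : ℕ) :
    Real.Gamma (3/2) / (Real.Gamma ((j : ℝ)+1) * Real.Gamma (3/2 - j)) = cc j := by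
  induction j with
  | zero =>
      have h32 : Real.Gamma (3/2 : ℝ) ≠ 0 := (Real.Gamma_pos_of_pos (by norm_num)).ne'
      simp only [Nat.cast_zero, zero_add, sub_zero, Real.Gamma_one, cc_zero]
      rw [one_mul, div_self h32]
  | succ n ih =>
      have hn1 : ((n : ℝ) + 1) ≠ 0 := by positivity
      have hg1 : Real.Gamma ((n : ℝ)+1) ≠ 0 := (Real.Gamma_pos_of_pos (by positivity)).ne'
      have hg2 : Real.Gamma ((1/2 : ℝ) - n) ≠ 0 := gamma_half_sub_ne n
      have eA : ((n+1 : ℕ) : ℝ) + 1 = ((n : ℝ) + 1) + 1 := by push_cast; ring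
      have eB : (3/2 : ℝ) - ((n+1 : ℕ) : ℝ) = (1/2 : ℝ) - n := by push_cast; ring
      have eC : (3/2 : ℝ) - (n : ℝ) = ((1/2 : ℝ) - n) + 1 := by ring
      rw [eA, eB, Real.Gamma_add_one hn1]
      rw [eC, Real.Gamma_add_one (half_sub_ne n)] at ih
      have hne : Real.Gamma ((n : ℝ)+1) * ((1/2 - (n : ℝ)) * Real.Gamma ((1/2 : ℝ) - n)) ≠ 0 :=
        mul_ne_zero hg1 (mul_ne_zero (half_sub_ne n) hg2)
      have hG : Real.Gamma (3/2 : ℝ)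
          = cc n * (Real.Gamma ((n : ℝ)+1) * ((1/2 - (n : ℝ)) * Real.Gamma ((1/2 : ℝ) - n))) :=
        (div_eq_iff hne).mp ih
      rw [cc_succ, hG]
      rw [div_eq_div_iff (mul_ne_zero (mul_ne_zero hn1 hg1) hg2) hn1]
      ring
  
lemma bhalf_even (j : ℕ) : bhalf 1 ((2*j : ℕ) : ℤ) = cc j := by
  rw [bhalf_even_eq, gamma_cc]

lemma bhalf_one : bhalf 1 ((2*0+1 : ℕ) : ℤ) = 1 := by
  rw [bhalf, bbinom, if_neg]
  · have h32 : Real.Gamma (3/2 : ℝ) ≠ 0 := (Real.Gamma_pos_of_pos (by norm_num)).ne'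
    have e1 : (1/2 : ℝ) * ((1 : ℕ) : ℝ) + 1 = 3/2 := by norm_num
    have e2 : (1/2 : ℝ) * (((2*0+1 : ℕ) : ℤ) : ℝ) + 1 = 3/2 := by push_cast; ring
    have e3 : (1/2 : ℝ) * (((1 : ℕ) : ℝ) - (((2*0+1 : ℕ) : ℤ) : ℝ)) + 1 = 1 := by push_cast; ring
    rw [e1, e2, e3, Real.Gamma_one, mul_one, div_self h32]
  · rintro ⟨m, hm1, hm2⟩
    have : (0 : ℝ) = m := by push_cast at hm2 ⊢; linarith
    have : (0 : ℤ) = m := by exact_mod_cast this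
    omega

lemma bhalf_odd_zero (j : ℕ) : bhalf 1 ((2*(j+1)+1 : ℕ) : ℤ) = 0 := by
  rw [bhalf, bbinom, if_pos]
  exact ⟨-(j+1), by omega, by push_cast; ring⟩

theorem bhalf_genfun_one (t : ℝ) (ht1 : -1 ≤ t) (ht2 : t ≤ 1) :
    HasSum (fun k : ℕ => bhalf 1 (k : ℤ) * t ^ k) (t + Real.sqrt (1 + t ^ 2)) := by
  have ht2' : t ^ 2 ≤ 1 := by nlinarith
  have heven : HasSum (fun j : ℕ => bhalf 1 ((2*j : ℕ) : ℤ) * t ^ (2*j))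
      (Real.sqrt (1 + t ^ 2)) := by
    have h := hasSum_cc (t ^ 2) (sq_nonneg t) ht2'
    have hfun : (fun j : ℕ => bhalf 1 ((2*j : ℕ) : ℤ) * t ^ (2*j))
        = fun j => cc j * (t ^ 2) ^ j := by
      funext j
      rw [bhalf_even, pow_mul]
    rw [hfun]
    exact h
  have hodd : HasSum (fun j : ℕ => bhalf 1 ((2*j+1 : ℕ) : ℤ) * t ^ (2*j+1)) t := by
    have hfun : (fun j : ℕ => bhalf 1 ((2*j+1 : ℕ) : ℤ) * t ^ (2*j+1))
        = fun j => if j = 0 then t else 0 := by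
      funext j
      cases j with
      | zero => rw [bhalf_one, one_mul, pow_one]; simp
      | succ n => rw [bhalf_odd_zero n, zero_mul]; simp
    rw [hfun]
    exact hasSum_ite_eq 0 t
  have := HasSum.even_add_odd (f := fun k : ℕ => bhalf 1 (k : ℤ) * t ^ k) heven hodd
  rwa [add_comm] at this
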